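/- Let n ≥ 1 and let c be a nonzero real number. If A is an n×n random real matrix whose entries A_ij are independent, each distributed according to a Borel probability measure μ_ij on ℝ that is atomless off 0, then P(det A = c) = 0. -/

import Mathlib

open MeasureTheory

lemma hyperplane_measure_zero :
    ∀ (m : ℕ) (C : Fin m → ℝ) (c : ℝ), c ≠ 0 →
    ∀ (μ : Fin m → Measure ℝ), (∀ i, IsProbabilityMeasure (μ i)) →
    (∀ i, ∀ x : ℝ, x ≠ 0 → μ i {x} = 0) →
    Measure.pi μ {a : Fin m → ℝ | ∑ j, C j * a j = c} = 0 := by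
  intro m
  induction m with
  | zero =>
    intro C c hc μ _ _
    have : {a : Fin 0 → ℝ | ∑ j, C j * a j = c} = ∅ := by
      ext a; simp [Ne.symm hc]
    rw [this]; simp
  | succ m ih =>
    intro C c hc μ hprob hatom
    haveI := hprob
    set ν : Measure (Fin m → ℝ) := Measure.pi (fun j => μ ((0 : Fin (m+1)).succAbove j))
      with hν
    have hmp := measurePreserving_piFinSuccAbove μ 0
    have hmps := hmp.symm
    have hmeas : Measurable fun a : Fin (m+1) → ℝ => ∑ j, C j * a j := by
      exact Finset.measurable_sum _ fun j _ => (measurable_pi_apply j).const_mul _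
    have hS : MeasurableSet {a : Fin (m+1) → ℝ | ∑ j, C j * a j = c} :=
      hmeas (measurableSet_singleton c)
    have key : Measure.pi μ {a : Fin (m+1) → ℝ | ∑ j, C j * a j = c}
        = ((μ 0).prod ν) ((MeasurableEquiv.piFinSuccAbove (fun _ => ℝ) 0).symm ⁻¹'
            {a : Fin (m+1) → ℝ | ∑ j, C j * a j = c}) := by
      rw [hmps.measure_preimage hS.nullMeasurableSet]
    rw [key]
    have hT : MeasurableSet ((MeasurableEquiv.piFinSuccAbove (fun _ => ℝ) 0).symm ⁻¹'
        {a : Fin (m+1) → ℝ | ∑ j, C j * a j = c}) :=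
      (MeasurableEquiv.piFinSuccAbove (fun _ => ℝ) 0).symm.measurable hS
    rw [Measure.prod_apply_symm hT]
    -- inner slice
    have hslice : ∀ b : Fin m → ℝ,
        (fun x => (x, b)) ⁻¹' ((MeasurableEquiv.piFinSuccAbove (fun _ => ℝ) 0).symm ⁻¹'
          {a : Fin (m+1) → ℝ | ∑ j, C j * a j = c})
        = {x : ℝ | C 0 * x + ∑ j, C (Fin.succ j) * b j = c} := by
      intro b
      ext x
      simp only [Set.mem_preimage, Set.mem_setOf_eq,
        MeasurableEquiv.piFinSuccAbove_symm_apply]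
      rw [Fin.sum_univ_succ]
      simp [Fin.zero_succAbove]
    have hrest : ν {b : Fin m → ℝ | ∑ j, C (Fin.succ j) * b j = c} = 0 := by
      have := ih (fun j => C (Fin.succ j)) c hc
        (fun j => μ ((0 : Fin (m+1)).succAbove j))
        (fun j => hprob _) (fun j => hatom _)
      simpa [hν] using this
    have hrestmeas : MeasurableSet {b : Fin m → ℝ | ∑ j, C (Fin.succ j) * b j = c} := by
      exact (Finset.measurable_sum _ fun j _ => (measurable_pi_apply j).const_mul _)
        (measurableSet_singleton c)
    have hbound : ∀ b : Fin m → ℝ,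
        (μ 0) {x : ℝ | C 0 * x + ∑ j, C (Fin.succ j) * b j = c}
          ≤ Set.indicator {b : Fin m → ℝ | ∑ j, C (Fin.succ j) * b j = c} (fun _ => 1) b := by
      intro b
      by_cases hb : ∑ j, C (Fin.succ j) * b j = c
      · rw [Set.indicator_of_mem
          (show b ∈ {b : Fin m → ℝ | ∑ j, C (Fin.succ j) * b j = c} from hb)]
        exact prob_le_one
      · rw [Set.indicator_of_notMem
          (show b ∉ {b : Fin m → ℝ | ∑ j, C (Fin.succ j) * b j = c} from hb)]
        by_cases hC0 : C 0 = 0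
        · have : {x : ℝ | C 0 * x + ∑ j, C (Fin.succ j) * b j = c} = ∅ := by
            ext x; simp [hC0, hb]
          simp [this]
        · have hset : {x : ℝ | C 0 * x + ∑ j, C (Fin.succ j) * b j = c}
              = {(c - ∑ j, C (Fin.succ j) * b j) / C 0} := by
            ext x
            simp only [Set.mem_setOf_eq, Set.mem_singleton_iff]
            rw [eq_div_iff hC0]
            constructor
            · intro h; linarith
            · intro h; linarith
          rw [hset]
          refine le_of_eq (hatom 0 _ ?_)
          intro h0
          rcases div_eq_zero_iff.mp h0 with h | h
          · exact hb (by linarith)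
          · exact hC0 h
    refine le_antisymm ?_ zero_le
    calc ∫⁻ y, (μ 0) ((fun x => (x, y)) ⁻¹'
            ((MeasurableEquiv.piFinSuccAbove (fun _ => ℝ) 0).symm ⁻¹'
              {a : Fin (m+1) → ℝ | ∑ j, C j * a j = c})) ∂ν
        ≤ ∫⁻ b, Set.indicator {b : Fin m → ℝ | ∑ j, C (Fin.succ j) * b j = c}
            (fun _ => (1 : ENNReal)) b ∂ν := by
          apply lintegral_mono
          intro b
          simp only [hslice]
          exact hbound b
      _ = ν {b : Fin m → ℝ | ∑ j, C (Fin.succ j) * b j = c} := by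
          rw [lintegral_indicator hrestmeas]
          simp
      _ = 0 := hrest

/-- If the entries of a random `n × n` real matrix are independent,
each with a law that is atomless off `0`, then `det A = c` has probability `0`
for every nonzero real `c`. -/
theorem det_eq_nonzero_const_prob_zero
    (n : ℕ) (hn : 1 ≤ n) (c : ℝ) (hc : c ≠ 0)
    (μ : Fin n → Fin n → Measure ℝ)
    [∀ i j, IsProbabilityMeasure (μ i j)]
    (hatomless : ∀ i j, ∀ x : ℝ, x ≠ 0 → μ i j {x} = 0) :
    Measure.pi (fun i => Measure.pi (fun j => μ i j))
      {A : Fin n → Fin n → ℝ | (Matrix.of A).det = c} = 0 := by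
  obtain ⟨m, rfl⟩ : ∃ m, n = m + 1 := ⟨n - 1, by omega⟩
  have hdetc : Continuous fun A : Fin (m+1) → Fin (m+1) → ℝ => (Matrix.of A).det := by
    have h : Continuous fun A : Matrix (Fin (m+1)) (Fin (m+1)) ℝ => A.det :=
      Continuous.matrix_det continuous_id
    exact h
  have hS : MeasurableSet {A : Fin (m+1) → Fin (m+1) → ℝ | (Matrix.of A).det = c} :=
    hdetc.measurable (measurableSet_singleton c)
  set ρ : Fin (m+1) → Measure (Fin (m+1) → ℝ) := fun i => Measure.pi (fun j => μ i j) with hρ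
  set ν : Measure (Fin m → (Fin (m+1) → ℝ)) :=
    Measure.pi (fun i => ρ ((0 : Fin (m+1)).succAbove i)) with hν
  have hmp := (measurePreserving_piFinSuccAbove ρ 0).symm
  rw [← hmp.measure_preimage hS.nullMeasurableSet]
  have hT : MeasurableSet
      ((MeasurableEquiv.piFinSuccAbove (fun _ => (Fin (m+1) → ℝ)) 0).symm ⁻¹'
        {A : Fin (m+1) → Fin (m+1) → ℝ | (Matrix.of A).det = c}) :=
    (MeasurableEquiv.piFinSuccAbove _ 0).symm.measurable hS
  rw [Measure.prod_apply_symm hT]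
  have hzero : ∀ B : Fin m → (Fin (m+1) → ℝ),
      (ρ 0) ((fun a => (a, B)) ⁻¹'
        ((MeasurableEquiv.piFinSuccAbove (fun _ => (Fin (m+1) → ℝ)) 0).symm ⁻¹'
          {A : Fin (m+1) → Fin (m+1) → ℝ | (Matrix.of A).det = c})) = 0 := by
    intro B
    have hset : (fun a => (a, B)) ⁻¹'
        ((MeasurableEquiv.piFinSuccAbove (fun _ => (Fin (m+1) → ℝ)) 0).symm ⁻¹'
          {A : Fin (m+1) → Fin (m+1) → ℝ | (Matrix.of A).det = c})
        = {a : Fin (m+1) → ℝ | ∑ j : Fin (m+1), ((-1 : ℝ) ^ (j : ℕ) *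
            (Matrix.of (fun i k => B i (Fin.succAbove j k))).det) * a j = c} := by
      ext a
      simp only [Set.mem_preimage, Set.mem_setOf_eq,
        MeasurableEquiv.piFinSuccAbove_symm_apply, Fin.insertNthEquiv_apply]
      rw [Matrix.det_succ_row_zero]
      have hrow0 : ∀ j, (Matrix.of
          ((Fin.insertNthEquiv (fun _ => Fin (m+1) → ℝ) 0) (a, B))) 0 j = a j := by
        intro j
        show ((0 : Fin (m+1)).insertNth (α := fun _ => Fin (m+1) → ℝ) a B) 0 j = a j
        rw [Fin.insertNth_apply_same]
      have hsub : ∀ j : Fin (m+1),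
          ((Matrix.of ((Fin.insertNthEquiv (fun _ => Fin (m+1) → ℝ) 0) (a, B))).submatrix
              Fin.succ j.succAbove)
            = Matrix.of (fun i k => B i (Fin.succAbove j k)) := by
        intro j
        ext i k
        show ((0 : Fin (m+1)).insertNth (α := fun _ => Fin (m+1) → ℝ) a B)
            (Fin.succ i) (j.succAbove k) = B i (j.succAbove k)
        rw [← Fin.zero_succAbove i, Fin.insertNth_apply_succAbove]
      constructor
      · intro h
        rw [← h]
        apply Finset.sum_congr rfl
        intro j _
        rw [hrow0, hsub]
        ring
      · intro h
        rw [← h]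
        apply Finset.sum_congr rfl
        intro j _
        rw [hrow0, hsub]
        ring
    rw [hset, hρ]
    exact hyperplane_measure_zero (m+1)
      (fun j => (-1 : ℝ) ^ (j : ℕ) * (Matrix.of (fun i k => B i (Fin.succAbove j k))).det)
      c hc (fun j => μ 0 j) (fun j => inferInstance) (fun j => hatomless 0 j)
  simp only [hzero, lintegral_zero]
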